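/- Let T ≥ 500 be a natural number and set b = √(2·log T − 2·log(3·2^{−3/2}·(2·log T)^{3/2})). Then 1 − exp(−(T/2)·Φᶜ(b)) ≥ 1 − T^{−1/(2√π)}; equivalently, exp(−(T/2)·Φᶜ(b)) ≤ T^{−1/(2√π)}. -/

import Mathlib

open MeasureTheory

/-- The standard normal density `φ(x) = (2π)^{-1/2} exp(-x²/2)`. -/
noncomputable def stdNormalPDF (x : ℝ) : ℝ :=
  (Real.sqrt (2 * Real.pi))⁻¹ * Real.exp (-x ^ 2 / 2)

/-- The standard normal complementary CDF `Φᶜ(x) = ∫_x^∞ φ(u) du`. -/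
noncomputable def stdNormalCCDF (x : ℝ) : ℝ :=
  ∫ u in Set.Ioi x, stdNormalPDF u

open Filter Set

lemma pdf_pos (x : ℝ) : 0 < stdNormalPDF x := by
  unfold stdNormalPDF
  positivity

lemma pdf_integrable : Integrable stdNormalPDF := by
  have h := (integrable_exp_neg_mul_sq (by norm_num : (0:ℝ) < 1/2)).const_mul
    (Real.sqrt (2 * Real.pi))⁻¹
  refine h.congr ?_
  filter_upwards with x
  unfold stdNormalPDF
  ring_nf

noncomputable def millG (u : ℝ) : ℝ := stdNormalPDF u * u / (u ^ 2 + 1)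

noncomputable def millG' (u : ℝ) : ℝ :=
  stdNormalPDF u * (1 - 2 * u ^ 2 - u ^ 4) / (u ^ 2 + 1) ^ 2

lemma hasDerivAt_pdf (u : ℝ) : HasDerivAt stdNormalPDF (-u * stdNormalPDF u) u := by
  have h1 : HasDerivAt (fun u : ℝ => -u ^ 2 / 2) (-u) u := by
    have := ((hasDerivAt_pow 2 u).neg).div_const 2
    simpa using this.congr_deriv (by ring)
  have h2 := (h1.exp).const_mul (Real.sqrt (2 * Real.pi))⁻¹
  unfold stdNormalPDF
  refine h2.congr_deriv ?_
  ring

lemma hasDerivAt_millG (u : ℝ) : HasDerivAt millG (millG' u) u := by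
  have hden : (u ^ 2 + 1) ≠ 0 := by positivity
  have h1 : HasDerivAt (fun u => stdNormalPDF u * u)
      (-u * stdNormalPDF u * u + stdNormalPDF u) u := by
    exact ((hasDerivAt_pdf u).mul (hasDerivAt_id u)).congr_deriv (by simp)
  have h2 : HasDerivAt (fun u : ℝ => u ^ 2 + 1) (2 * u) u := by
    simpa using (hasDerivAt_pow 2 u).add_const 1
  have h3 := h1.div h2 hden
  unfold millG millG'
  refine h3.congr_deriv ?_
  field_simp
  ring

lemma millG'_abs_le (u : ℝ) : |millG' u| ≤ stdNormalPDF u := by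
  unfold millG'
  rw [abs_div, abs_mul, abs_of_pos (pdf_pos u), abs_of_pos (by positivity : (0:ℝ) < (u^2+1)^2)]
  rw [div_le_iff₀ (by positivity)]
  have h : |1 - 2 * u ^ 2 - u ^ 4| ≤ (u ^ 2 + 1) ^ 2 := by
    rw [abs_le]; constructor <;> nlinarith [sq_nonneg u, sq_nonneg (u^2)]
  calc stdNormalPDF u * |1 - 2*u^2 - u^4| ≤ stdNormalPDF u * (u^2+1)^2 :=
        mul_le_mul_of_nonneg_left h (pdf_pos u).le
    _ = stdNormalPDF u * (u^2+1)^2 := rfl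

lemma millG'_integrableOn (x : ℝ) : IntegrableOn millG' (Set.Ioi x) := by
  have hc : Continuous millG' := by
    unfold millG' stdNormalPDF
    fun_prop (disch := intro x; positivity)
  refine Integrable.mono pdf_integrable.integrableOn hc.aestronglyMeasurable.restrict ?_
  filter_upwards with u
  rw [Real.norm_eq_abs, Real.norm_eq_abs, abs_of_pos (pdf_pos u)]
  exact millG'_abs_le u

lemma millG_tendsto : Tendsto millG atTop (nhds 0) := by
  have hpdf : Tendsto stdNormalPDF atTop (nhds 0) := by
    have h1 : Tendsto (fun u : ℝ => -u ^ 2 / 2) atTop atBot := by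
      apply Tendsto.atBot_div_const (by norm_num)
      exact tendsto_neg_atBot_iff.mpr (tendsto_pow_atTop (by norm_num))
    have h2 := Real.tendsto_exp_atBot.comp h1
    have h3 := h2.const_mul (Real.sqrt (2 * Real.pi))⁻¹
    rw [mul_zero] at h3
    unfold stdNormalPDF
    exact h3
  apply squeeze_zero_norm' _ hpdf
  filter_upwards [eventually_ge_atTop (0:ℝ)] with u hu
  rw [Real.norm_eq_abs]
  unfold millG
  rw [abs_div, abs_mul, abs_of_pos (pdf_pos u), abs_of_nonneg hu,
    abs_of_pos (by positivity : (0:ℝ) < u^2+1), div_le_iff₀ (by positivity)]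
  exact mul_le_mul_of_nonneg_left (by nlinarith [sq_nonneg (u-1)]) (pdf_pos u).le

lemma mill_lower (x : ℝ) : stdNormalPDF x * x / (x ^ 2 + 1) ≤ stdNormalCCDF x := by
  have hint : ∫ u in Set.Ioi x, millG' u = 0 - millG x :=
    integral_Ioi_of_hasDerivAt_of_tendsto' (fun u _ => hasDerivAt_millG u)
      (millG'_integrableOn x) millG_tendsto
  have hmono : ∫ u in Set.Ioi x, (- millG' u) ≤ ∫ u in Set.Ioi x, stdNormalPDF u := by
    apply setIntegral_mono ((millG'_integrableOn x).neg) pdf_integrable.integrableOn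
    intro u
    simp only [Pi.neg_apply]
    linarith [abs_le.mp (millG'_abs_le u)]
  rw [integral_neg, hint] at hmono
  unfold stdNormalCCDF
  unfold millG at hmono
  linarith

lemma aux_key (L a : ℝ) (hL : 12.428 ≤ L) (h1 : 0.75*L - 4.6 ≤ a)
    (h2 : L*a ≤ L^2 - 10.5*L + 36) : 4*(a+1)^2 ≤ 9*L*a := by
  nlinarith [sq_nonneg (L - 12.428), mul_nonneg (sub_nonneg.2 h1) (sub_nonneg.2 h2),
    sq_nonneg (a - 4.7), mul_pos (show (0:ℝ) < L by linarith) (show (0:ℝ) < L by linarith)]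

lemma aux_key2 (L a sL bb : ℝ) (ha : 0 < a) (hsL2 : sL^2 = L) (hb2 : bb^2 = a)
    (hnn : 0 ≤ sL*bb) (key : 4*(a+1)^2 ≤ 9*L*a) : 2*(a+1) ≤ 3*(sL*bb) := by
  nlinarith [sq_nonneg (sL*bb), key, mul_pos ha ha]

set_option maxHeartbeats 1000000 in
/-- The 'bounding the left factor' step in the proof of the paper's main theorem:
`1 − e^{(T/2)·ei'(b)} ≥ 1 − T^{−1/(2√π)}` where `ei'(b) = −Φᶜ(b)`. -/
theorem stmt16 (T : ℕ) (hT : 500 ≤ T)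
    (b : ℝ) (hb : b = Real.sqrt (2 * Real.log T
      - 2 * Real.log (3 * (2 : ℝ) ^ (-(3 : ℝ) / 2) * (2 * Real.log T) ^ ((3 : ℝ) / 2)))) :
    1 - Real.exp (-((T : ℝ) / 2) * stdNormalCCDF b)
      ≥ 1 - (T : ℝ) ^ (-(1 / (2 * Real.sqrt Real.pi))) := by
  have hT500 : (500:ℝ) ≤ (T:ℝ) := by exact_mod_cast hT
  have hT0 : (0:ℝ) < T := by linarith
  -- numeric log facts
  have hl2lo := Real.log_two_gt_d9
  have hl2hi := Real.log_two_lt_d9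
  have h98lo : (1/9 : ℝ) ≤ Real.log (9/8) := by
    have := Real.one_sub_inv_le_log_of_pos (show (0:ℝ) < 9/8 by norm_num)
    norm_num at this ⊢; linarith
  have h98hi : Real.log (9/8) ≤ 1/8 := by
    have := Real.log_le_sub_one_of_pos (show (0:ℝ) < 9/8 by norm_num)
    linarith
  have h9 : Real.log 9 = 2 * Real.log 3 := by
    rw [show (9:ℝ) = 3^(2:ℕ) by norm_num, Real.log_pow]; push_cast; ring
  have h9' : Real.log 9 = 3 * Real.log 2 + Real.log (9/8) := by
    rw [show (9:ℝ) = 2^(3:ℕ) * (9/8) by norm_num,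
      Real.log_mul (by positivity) (by norm_num), Real.log_pow]
    push_cast; ring
  have hl3lo : (1.095 : ℝ) ≤ Real.log 3 := by linarith
  have hl3hi : Real.log 3 ≤ 1.1023 := by linarith
  have h12 : Real.log 12 = 2 * Real.log 2 + Real.log 3 := by
    rw [show (12:ℝ) = 2^(2:ℕ) * 3 by norm_num,
      Real.log_mul (by positivity) (by norm_num), Real.log_pow]
    push_cast; ring
  have hlog500 : (6.214 : ℝ) ≤ Real.log 500 := by
    have h512 : Real.log 512 = 9 * Real.log 2 := by
      rw [show (512:ℝ) = 2^(9:ℕ) by norm_num, Real.log_pow]; push_cast; ring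
    have hq : Real.log 500 = Real.log 512 + Real.log (125/128) := by
      rw [← Real.log_mul (by norm_num) (by norm_num)]; norm_num
    have hql := Real.one_sub_inv_le_log_of_pos (show (0:ℝ) < 125/128 by norm_num)
    norm_num at hql
    linarith
  have hlogT : Real.log 500 ≤ Real.log T := Real.log_le_log (by norm_num) hT500
  set L : ℝ := 2 * Real.log T with hLdef
  have hL : (12.428 : ℝ) ≤ L := by simp only [hLdef]; linarith
  have hLpos : (0:ℝ) < L := by linarith
  set C : ℝ := 3 * (2 : ℝ) ^ (-(3 : ℝ) / 2) * L ^ ((3 : ℝ) / 2) with hCdef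
  have hCpos : 0 < C := by positivity
  set a : ℝ := L - 2 * Real.log C with hadef
  -- log L bounds
  have hlogLu : Real.log L ≤ Real.log 12 + (L/12 - 1) := by
    have h := Real.log_le_sub_one_of_pos (show (0:ℝ) < L/12 by positivity)
    rw [Real.log_div hLpos.ne' (by norm_num)] at h
    linarith
  have hlogLl : Real.log 12 + (1 - 12/L) ≤ Real.log L := by
    have h := Real.one_sub_inv_le_log_of_pos (show (0:ℝ) < L/12 by positivity)
    rw [Real.log_div hLpos.ne' (by norm_num)] at h
    have h2 : (L/12)⁻¹ = 12/L := by field_simp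
    rw [h2] at h
    linarith
  -- expand log C
  have hlogC : Real.log C = Real.log 3 + (-(3:ℝ)/2) * Real.log 2 + (3/2) * Real.log L := by
    rw [hCdef, Real.log_mul (by positivity) (by positivity),
      Real.log_mul (by norm_num) (by positivity),
      Real.log_rpow (by norm_num), Real.log_rpow hLpos]
  have ha_eq : a = L - 3 * Real.log L - (2 * Real.log 3 - 3 * Real.log 2) := by
    rw [hadef, hlogC]; ring
  have ha_lb : 0.75 * L - 4.6 ≤ a := by
    rw [ha_eq]; linarith
  have ha_ub' : a ≤ L - 10.5 + 36/L := by
    have h363 : 36/L = 3*(12/L) := by ring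
    rw [ha_eq, h363]; linarith
  have ha_ub : L * a ≤ L^2 - 10.5 * L + 36 := by
    have heq : L * (L - 10.5 + 36/L) = L^2 - 10.5*L + 36 := by field_simp
    have h := mul_le_mul_of_nonneg_left ha_ub' hLpos.le
    rw [heq] at h
    exact h
  have hapos : (0:ℝ) < a := by linarith
  have key : 4*(a+1)^2 ≤ 9*L*a := aux_key L a hL ha_lb ha_ub
  -- b facts
  have hb2 : b^2 = a := by
    rw [hb, Real.sq_sqrt hapos.le]
  have hbnn : 0 ≤ b := hb ▸ Real.sqrt_nonneg _
  -- sqrt variables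
  set s : ℝ := Real.sqrt Real.pi with hsdef
  have hspos : 0 < s := Real.sqrt_pos.mpr Real.pi_pos
  set sL : ℝ := Real.sqrt L with hsLdef
  have hsLpos : 0 < sL := Real.sqrt_pos.mpr hLpos
  have hsL2 : sL^2 = L := Real.sq_sqrt hLpos.le
  clear_value L C a s sL
  have key2 : 2*(a+1) ≤ 3*(sL*b) :=
    aux_key2 L a sL b hapos hsL2 hb2 (mul_nonneg hsLpos.le hbnn) key
  -- the constant: (√(2π))⁻¹ * 2^(-3/2) = (4√π)⁻¹
  have hconst : (Real.sqrt (2*Real.pi))⁻¹ * (2:ℝ)^(-(3:ℝ)/2) = (4*s)⁻¹ := by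
    have h1 : (2:ℝ)^(-(3:ℝ)/2) = ((2:ℝ)^((3:ℝ)/2))⁻¹ := by
      rw [← Real.rpow_neg (by norm_num)]; norm_num
    have h2 : Real.sqrt 2 * (2:ℝ)^((3:ℝ)/2) = 4 := by
      rw [Real.sqrt_eq_rpow, ← Real.rpow_add (by norm_num)]
      rw [show ((1:ℝ)/2 + 3/2) = ((2:ℕ):ℝ) by norm_num, Real.rpow_natCast]
      norm_num
    have hs2 : (0:ℝ) < Real.sqrt 2 := Real.sqrt_pos.mpr (by norm_num)
    have hr : (0:ℝ) < (2:ℝ)^((3:ℝ)/2) := by positivity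
    rw [h1, Real.sqrt_mul (by norm_num : (0:ℝ) ≤ 2), ← hsdef, ← h2]
    field_simp
  -- L^(3/2) = L * sL
  have hL32 : L ^ ((3:ℝ)/2) = L * sL := by
    rw [show ((3:ℝ)/2) = 1 + 1/2 by norm_num, Real.rpow_add hLpos, Real.rpow_one,
      hsLdef, Real.sqrt_eq_rpow]
  -- exp(-b²/2) = C / T
  have e1 : Real.exp (-b^2/2) = C / T := by
    have h : -b^2/2 = Real.log C - Real.log T := by
      rw [hb2, hadef, hLdef]; ring
    rw [h, Real.exp_sub, Real.exp_log hCpos, Real.exp_log hT0]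
  -- pdf value
  have hpdfb : stdNormalPDF b = 3 * (L * sL) / (4 * s * T) := by
    unfold stdNormalPDF
    rw [e1, hCdef, hL32]
    rw [show (Real.sqrt (2*Real.pi))⁻¹ * (3 * (2:ℝ)^(-(3:ℝ)/2) * (L*sL) / (T:ℝ))
        = ((Real.sqrt (2*Real.pi))⁻¹ * (2:ℝ)^(-(3:ℝ)/2)) * (3*(L*sL)/(T:ℝ)) from by ring,
      hconst]
    field_simp
  -- main inequality on exponents
  have hmain : Real.log T / (2*s) ≤ ((T:ℝ)/2) * stdNormalCCDF b := by
    have hmill := mill_lower b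
    have step1 : ((T:ℝ)/2) * (stdNormalPDF b * b / (b^2+1)) ≤ ((T:ℝ)/2) * stdNormalCCDF b :=
      mul_le_mul_of_nonneg_left hmill (by positivity)
    have hval : ((T:ℝ)/2) * (stdNormalPDF b * b / (b^2+1)) = 3*L*(sL*b) / (8*s*(a+1)) := by
      rw [hpdfb, hb2]
      field_simp
      ring
    rw [hval] at step1
    have hfin : Real.log T / (2*s) ≤ 3*L*(sL*b) / (8*s*(a+1)) := by
      rw [div_le_div_iff₀ (by positivity) (by positivity)]
      have hLT : Real.log (T:ℝ) = L / 2 := by rw [hLdef]; ring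
      rw [hLT]
      have hkey3 := mul_le_mul_of_nonneg_left key2 (mul_pos hLpos hspos).le
      linarith [hkey3]
    linarith
  -- conclude
  have hrpow : (T:ℝ) ^ (-(1 / (2 * s))) =
      Real.exp (Real.log T * (-(1/(2*s)))) := Real.rpow_def_of_pos hT0 _
  rw [hrpow, ge_iff_le]
  apply sub_le_sub_left
  apply Real.exp_le_exp.mpr
  have hg : Real.log (T:ℝ) * -(1 / (2 * s)) = -(Real.log (T:ℝ) / (2*s)) := by ring
  rw [hg, neg_mul]
  exact neg_le_neg hmain
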